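/- Abel's identity: for real numbers x, y and a nonnegative integer n with x ≠ 0, Σ_{j=0}^{n} C(n,j) x (x + j)^{j-1} (y - j)^{n-j} = (x + y)^n. -/

import Mathlib

open Finset

/-- finite difference lemma: the `m`-th finite difference of a polynomial of degree `< m`
vanishes. -/
lemma fd : ∀ (r : ℕ) (m : ℕ) (c : ℝ), r < m →
    ∑ j ∈ Finset.range (m + 1), (-1 : ℝ) ^ j * (m.choose j) * (c + j) ^ r = 0 := by
  intro r
  induction r with
  | zero =>
    intro m c hm
    have h := add_pow (-1 : ℝ) 1 m
    simp only [one_pow, mul_one, neg_add_cancel] at h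
    rw [zero_pow (by omega : m ≠ 0)] at h
    simpa using h.symm
  | succ s ih =>
    intro m c hm
    obtain ⟨t, rfl⟩ : ∃ t, m = t + 1 := ⟨m - 1, by omega⟩
    have hst : s < t := by omega
    have step1 : ∑ j ∈ Finset.range (t + 1 + 1), (-1 : ℝ) ^ j * ((t+1).choose j) * (c + j) ^ (s+1)
        = (∑ j ∈ Finset.range (t + 1 + 1), ((-1 : ℝ) ^ j * ((t+1).choose j) * (c + j) ^ s)) * c
          + ∑ j ∈ Finset.range (t + 1 + 1),
              (-1 : ℝ) ^ j * ((t+1).choose j) * (c + j) ^ s * j := by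
      rw [Finset.sum_mul, ← Finset.sum_add_distrib]
      exact Finset.sum_congr rfl fun j _ => by ring
    rw [step1, ih (t+1) c (by omega), zero_mul, zero_add]
    rw [Finset.sum_range_succ']
    simp only [Nat.cast_zero, mul_zero, add_zero]
    have key : ∀ i : ℕ, (-1:ℝ) ^ (i+1) * ((t+1).choose (i+1)) * (c + ((i+1 : ℕ) : ℝ)) ^ s * ((i+1 : ℕ) : ℝ)
        = (-((t:ℝ)+1)) * ((-1:ℝ)^i * (t.choose i) * ((c+1) + i) ^ s) := by
      intro i
      have h1 : (((t+1).choose (i+1) : ℕ) : ℝ) * (((i+1 : ℕ) : ℕ) : ℝ) = ((t+1 : ℕ) : ℝ) * ((t.choose i : ℕ) : ℝ) := by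
        rw [← Nat.cast_mul, ← Nat.cast_mul, ← Nat.add_one_mul_choose_eq]
      have h2 : (c + ((i+1 : ℕ) : ℝ)) = ((c+1) + (i : ℝ)) := by push_cast; ring
      rw [h2]
      push_cast at h1 ⊢
      calc (-1:ℝ) ^ (i+1) * ((t+1).choose (i+1)) * ((c+1) + i) ^ s * ((i:ℝ)+1)
          = (-(-1:ℝ)^i) * ((((t+1).choose (i+1) : ℝ)) * ((i:ℝ)+1)) * ((c+1) + i) ^ s := by
            rw [pow_succ]; ring
        _ = (-(-1:ℝ)^i) * (((t:ℝ)+1) * (t.choose i : ℝ)) * ((c+1) + i) ^ s := by rw [h1]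
        _ = (-((t:ℝ)+1)) * ((-1:ℝ)^i * (t.choose i) * ((c+1) + i) ^ s) := by ring
    calc ∑ i ∈ Finset.range (t+1), (-1:ℝ) ^ (i+1) * ((t+1).choose (i+1)) * (c + ((i+1:ℕ) : ℝ)) ^ s * ((i+1:ℕ) : ℝ)
        = ∑ i ∈ Finset.range (t+1), (-((t:ℝ)+1)) * ((-1:ℝ)^i * (t.choose i) * ((c+1) + i) ^ s) := by
          exact Finset.sum_congr rfl fun i _ => key i
      _ = (-((t:ℝ)+1)) * ∑ i ∈ Finset.range (t+1), ((-1:ℝ)^i * (t.choose i) * ((c+1) + i) ^ s) := by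
          rw [Finset.mul_sum]
      _ = 0 := by rw [ih t (c+1) hst, mul_zero]

lemma choose_swap (n j k : ℕ) : n.choose j * (n - j).choose k = n.choose k * (n - k).choose j := by
  rcases le_or_gt (j + k) n with h | h
  · have h1 := Nat.choose_mul (n := n) (Nat.le_add_right j k)
    have h2 := Nat.choose_mul (n := n) (Nat.le_add_left k j)
    rw [Nat.add_sub_cancel_left] at h1
    rw [Nat.add_sub_cancel] at h2
    have h3 : (j + k).choose j = (j + k).choose k := by
      rw [← Nat.choose_symm (Nat.le_add_left k j), Nat.add_sub_cancel]
    rw [h3] at h1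
    omega
  · rcases le_or_gt j n with hj | hj
    · have e1 : (n - j).choose k = 0 := Nat.choose_eq_zero_of_lt (by omega)
      rcases le_or_gt k n with hk | hk
      · have e2 : (n - k).choose j = 0 := Nat.choose_eq_zero_of_lt (by omega)
        rw [e1, e2]; ring
      · have e2 : n.choose k = 0 := Nat.choose_eq_zero_of_lt hk
        rw [e1, e2]; ring
    · have e1 : n.choose j = 0 := Nat.choose_eq_zero_of_lt hj
      have e2 : (n - k).choose j = 0 := Nat.choose_eq_zero_of_lt (by omega)
      rw [e1, e2]; ring


lemma abel_inner_sum (n k : ℕ) (x y : ℝ) (hx : x ≠ 0) (hk : k ≤ n) :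
    ∑ j ∈ Finset.range (n+1), (n.choose j:ℝ) * x * (x+(j:ℝ))^((j:ℤ)-1) *
      ((x+y)^k * (-(x+(j:ℝ)))^(n-j-k) * ((n-j).choose k:ℝ))
    = if k = n then (x+y)^n else 0 := by
  set m := n - k with hm
  -- restrict the sum to j ≤ m
  have hsub : Finset.range (m+1) ⊆ Finset.range (n+1) := Finset.range_subset_range.mpr (by omega)
  have hstep1 : ∑ j ∈ Finset.range (n+1), (n.choose j:ℝ) * x * (x+(j:ℝ))^((j:ℤ)-1) *
      ((x+y)^k * (-(x+(j:ℝ)))^(n-j-k) * ((n-j).choose k:ℝ))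
      = ∑ j ∈ Finset.range (m+1), (n.choose j:ℝ) * x * (x+(j:ℝ))^((j:ℤ)-1) *
      ((x+y)^k * (-(x+(j:ℝ)))^(n-j-k) * ((n-j).choose k:ℝ)) := by
    refine (Finset.sum_subset hsub ?_).symm
    intro j hj hj'
    simp only [Finset.mem_range] at hj hj'
    have : (n - j).choose k = 0 := Nat.choose_eq_zero_of_lt (by omega)
    rw [this]; push_cast; ring
  rw [hstep1]
  -- rewrite each term
  have hstep2 : ∀ j ∈ Finset.range (m+1), (n.choose j:ℝ) * x * (x+(j:ℝ))^((j:ℤ)-1) *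
      ((x+y)^k * (-(x+(j:ℝ)))^(n-j-k) * ((n-j).choose k:ℝ))
      = ((n.choose k:ℝ) * x * (x+y)^k) *
        ((m.choose j:ℝ) * ((-1:ℝ)^(m-j) * ((x+(j:ℝ))^((j:ℤ)-1) * (x+(j:ℝ))^(m-j)))) := by
    intro j hj
    simp only [Finset.mem_range] at hj
    have hc : (n.choose j : ℝ) * ((n-j).choose k : ℝ) = (n.choose k : ℝ) * (m.choose j : ℝ) := by
      exact_mod_cast congrArg (Nat.cast : ℕ → ℝ) (choose_swap n j k)
    have hsub' : n - j - k = m - j := by omega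
    have hneg : (-(x+(j:ℝ)))^(m-j) = (-1:ℝ)^(m-j) * (x+(j:ℝ))^(m-j) := by
      rw [neg_pow]
    rw [hsub', hneg]
    linear_combination (x * (x+y)^k * ((-1:ℝ)^(m-j) * ((x+(j:ℝ))^((j:ℤ)-1) * (x+(j:ℝ))^(m-j)))) * hc
  rw [Finset.sum_congr rfl hstep2, ← Finset.mul_sum]
  rcases Nat.eq_zero_or_pos m with hm0 | hm1
  · -- k = n : single term j = 0
    have hkn : k = n := by omega
    subst hkn
    rw [hm0]
    simp only [zero_add, Finset.sum_range_one, Nat.choose_self, Nat.choose_zero_right,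
      Nat.cast_zero, Nat.cast_one, if_pos rfl, ↓reduceIte, add_zero, Nat.sub_zero, Nat.zero_sub, pow_zero,
      mul_one, one_mul]
    rw [show (0:ℤ) - 1 = -1 by norm_num, zpow_neg_one]
    field_simp
  · -- k < n : the inner sum vanishes
    have hkn : k ≠ n := by omega
    rw [if_neg hkn]
    have hcomb : ∀ j ∈ Finset.range (m+1),
        (m.choose j:ℝ) * ((-1:ℝ)^(m-j) * ((x+(j:ℝ))^((j:ℤ)-1) * (x+(j:ℝ))^(m-j)))
        = (-1:ℝ)^m * ((-1:ℝ)^j * (m.choose j:ℝ) * (x+(j:ℝ))^(m-1)) := by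
      intro j hj
      simp only [Finset.mem_range] at hj
      have hjm : j ≤ m := by omega
      have hsign : (-1:ℝ)^(m-j) = (-1)^m * (-1)^j := by
        calc (-1:ℝ)^(m-j) = (-1)^(m-j) * (((-1:ℝ)*(-1))^j) := by norm_num
          _ = ((-1:ℝ)^(m-j) * (-1)^j) * (-1)^j := by rw [mul_pow]; ring
          _ = (-1:ℝ)^(m-j+j) * (-1)^j := by rw [pow_add]
          _ = (-1:ℝ)^m * (-1)^j := by rw [Nat.sub_add_cancel hjm]
      have hpow : (x+(j:ℝ))^((j:ℤ)-1) * (x+(j:ℝ))^(m-j) = (x+(j:ℝ))^(m-1) := by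
        cases j with
        | zero =>
          simp only [Nat.cast_zero, add_zero, Nat.sub_zero]
          rw [show (0:ℤ) - 1 = -1 by norm_num, zpow_neg_one]
          rw [show m = (m-1)+1 by omega, pow_succ']
          rw [← mul_assoc, inv_mul_cancel₀ hx, one_mul]
          congr 1
        | succ i =>
          rw [show ((i+1:ℕ):ℤ) - 1 = ((i:ℕ):ℤ) by push_cast; ring, zpow_natCast, ← pow_add]
          congr 1
          omega
      rw [hsign, hpow]
      ring
    rw [Finset.sum_congr rfl hcomb, ← Finset.mul_sum]
    rw [fd (m-1) m x (by omega), mul_zero, mul_zero]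

/-- Abel's identity: for real `x ≠ 0`, `y` and `n : ℕ`,
`Σ_{j=0}^{n} C(n,j) x (x + j)^{j-1} (y - j)^{n-j} = (x + y)^n`. -/
theorem abel_identity (n : ℕ) (x y : ℝ) (hx : x ≠ 0) :
    ∑ j ∈ Finset.range (n + 1),
      (n.choose j : ℝ) * x * (x + (j : ℝ)) ^ ((j : ℤ) - 1) * (y - (j : ℝ)) ^ (n - j)
    = (x + y) ^ n := by
  have expand : ∀ j ∈ Finset.range (n+1), (y - (j:ℝ))^(n-j)
      = ∑ k ∈ Finset.range (n+1), (x+y)^k * (-(x+(j:ℝ)))^(n-j-k) * ((n-j).choose k:ℝ) := by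
    intro j hj
    simp only [Finset.mem_range] at hj
    rw [show y - (j:ℝ) = (x+y) + (-(x+(j:ℝ))) by ring, add_pow]
    refine Finset.sum_subset (Finset.range_subset_range.mpr (by omega)) ?_
    intro k _ hk
    simp only [Finset.mem_range, not_lt] at hk
    rw [Nat.choose_eq_zero_of_lt (by omega), Nat.cast_zero, mul_zero]
  calc ∑ j ∈ Finset.range (n+1),
        (n.choose j:ℝ) * x * (x+(j:ℝ))^((j:ℤ)-1) * (y-(j:ℝ))^(n-j)
      = ∑ j ∈ Finset.range (n+1), ∑ k ∈ Finset.range (n+1),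
          (n.choose j:ℝ) * x * (x+(j:ℝ))^((j:ℤ)-1) *
            ((x+y)^k * (-(x+(j:ℝ)))^(n-j-k) * ((n-j).choose k:ℝ)) := by
        refine Finset.sum_congr rfl fun j hj => ?_
        rw [expand j hj, Finset.mul_sum]
    _ = ∑ k ∈ Finset.range (n+1), ∑ j ∈ Finset.range (n+1),
          (n.choose j:ℝ) * x * (x+(j:ℝ))^((j:ℤ)-1) *
            ((x+y)^k * (-(x+(j:ℝ)))^(n-j-k) * ((n-j).choose k:ℝ)) := Finset.sum_comm
    _ = ∑ k ∈ Finset.range (n+1), (if k = n then (x+y)^n else 0) :=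
        Finset.sum_congr rfl fun k hk =>
          abel_inner_sum n k x y hx (by simp only [Finset.mem_range] at hk; omega)
    _ = (x+y)^n := by simp
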